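/- Let G ∈ ℝ^{n×n}, P ≻ 0 with PG + Gᵀ P ≻ 0. Then the canonical homogeneous norm ‖·‖_{d,P} : ℝ^n → [0,∞) is continuous on ℝ^n (in particular, ‖x‖_{d,P} → 0 as x → 0). -/

import Mathlib

open Matrix

/-- Weighted Euclidean norm `‖x‖_P = √(xᵀ P x)`. -/
noncomputable def wnorm {n : ℕ} (P : Matrix (Fin n) (Fin n) ℝ) (x : Fin n → ℝ) : ℝ :=
  Real.sqrt (x ⬝ᵥ P *ᵥ x)

/-- `hnorm` is the canonical homogeneous norm induced by the dilation `d(s) = e^{sG}`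
and the weighted norm `‖·‖_P`. -/
def IsCanonicalHomNorm {n : ℕ} (G P : Matrix (Fin n) (Fin n) ℝ)
    (hnorm : (Fin n → ℝ) → ℝ) : Prop :=
  hnorm 0 = 0 ∧ ∀ x : Fin n → ℝ, x ≠ 0 → 0 < hnorm x ∧
    wnorm P (NormedSpace.exp ((-Real.log (hnorm x)) • G) *ᵥ x) = 1

namespace Stmt6Aux

variable {n : ℕ}

noncomputable def E (G : Matrix (Fin n) (Fin n) ℝ) (s : ℝ) : Matrix (Fin n) (Fin n) ℝ :=
  NormedSpace.exp ((-s) • G)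

theorem hasDerivAt_vec (G : Matrix (Fin n) (Fin n) ℝ) (x : Fin n → ℝ) (s : ℝ) :
    HasDerivAt (fun s => E G s *ᵥ x) (-(G *ᵥ (E G s *ᵥ x))) s := by
  letI : SeminormedRing (Matrix (Fin n) (Fin n) ℝ) := Matrix.linftyOpSemiNormedRing
  letI : NormedRing (Matrix (Fin n) (Fin n) ℝ) := Matrix.linftyOpNormedRing
  letI : NormedAlgebra ℝ (Matrix (Fin n) (Fin n) ℝ) := Matrix.linftyOpNormedAlgebra
  have hE : HasDerivAt (E G) (-(G * E G s)) s := by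
    have h1 : HasDerivAt (fun u : ℝ => NormedSpace.exp (u • G))
        (G * NormedSpace.exp ((-s) • G)) (-s) := hasDerivAt_exp_smul_const' G (-s)
    have h2 : HasDerivAt (fun s : ℝ => -s) (-1 : ℝ) s := (hasDerivAt_id s).neg
    have h3 := HasDerivAt.scomp s h1 h2
    simp only [neg_one_smul] at h3
    exact h3
  let L : Matrix (Fin n) (Fin n) ℝ →ₗ[ℝ] (Fin n → ℝ) :=
    { toFun := fun M => M *ᵥ x
      map_add' := fun A B => Matrix.add_mulVec A B x
      map_smul' := fun c A => Matrix.smul_mulVec c A x }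
  have hL := (LinearMap.toContinuousLinearMap L).hasFDerivAt.comp_hasDerivAt s hE
  simp only [LinearMap.coe_toContinuousLinearMap', L, LinearMap.coe_mk, AddHom.coe_mk] at hL
  have hL' : HasDerivAt (fun s => E G s *ᵥ x) ((-(G * E G s)) *ᵥ x) s := hL
  simpa [Matrix.neg_mulVec, Matrix.mulVec_mulVec] using hL'

end Stmt6Aux

namespace Stmt6Aux

variable {n : ℕ}

noncomputable def q (G P : Matrix (Fin n) (Fin n) ℝ) (s : ℝ) (x : Fin n → ℝ) : ℝ :=
  (E G s *ᵥ x) ⬝ᵥ P *ᵥ (E G s *ᵥ x)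

theorem hasDerivAt_q (G P : Matrix (Fin n) (Fin n) ℝ) (x : Fin n → ℝ) (s : ℝ) :
    HasDerivAt (fun s => q G P s x)
      (-((E G s *ᵥ x) ⬝ᵥ ((P * G + Gᵀ * P) *ᵥ (E G s *ᵥ x)))) s := by
  set v : Fin n → ℝ := E G s *ᵥ x with hv
  set v' : Fin n → ℝ := -(G *ᵥ v) with hv'
  have hF : HasDerivAt (fun s => E G s *ᵥ x) v' s := hasDerivAt_vec G x s
  have hFi : ∀ i, HasDerivAt (fun s => (E G s *ᵥ x) i) (v' i) s := fun i =>
    ((ContinuousLinearMap.proj (R := ℝ) (φ := fun _ : Fin n => ℝ) i).hasFDerivAt).comp_hasDerivAt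
      s hF
  have hsum : HasDerivAt (fun s => ∑ i, (E G s *ᵥ x) i * ∑ j, P i j * (E G s *ᵥ x) j)
      (∑ i, (v' i * ∑ j, P i j * v j + v i * ∑ j, P i j * v' j)) s := by
    refine HasDerivAt.fun_sum fun i _ => ?_
    exact (hFi i).mul (HasDerivAt.fun_sum fun j _ => (hFi j).const_mul (P i j))
  have hfun : (fun s => q G P s x) = fun s => ∑ i, (E G s *ᵥ x) i * ∑ j, P i j * (E G s *ᵥ x) j := by
    funext t
    simp [q, dotProduct, Matrix.mulVec]
  have hval : (∑ i, (v' i * ∑ j, P i j * v j + v i * ∑ j, P i j * v' j))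
      = v' ⬝ᵥ P *ᵥ v + v ⬝ᵥ P *ᵥ v' := by
    simp [dotProduct, Matrix.mulVec, Finset.sum_add_distrib]
  have hval2 : v' ⬝ᵥ P *ᵥ v + v ⬝ᵥ P *ᵥ v' = -(v ⬝ᵥ ((P * G + Gᵀ * P) *ᵥ v)) := by
    have e1 : v' ⬝ᵥ P *ᵥ v = -(v ⬝ᵥ ((Gᵀ * P) *ᵥ v)) := by
      rw [hv', neg_dotProduct]
      congr 1
      rw [← Matrix.mulVec_mulVec, Matrix.dotProduct_mulVec v Gᵀ, Matrix.vecMul_transpose]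
    have e2 : v ⬝ᵥ P *ᵥ v' = -(v ⬝ᵥ ((P * G) *ᵥ v)) := by
      rw [hv', Matrix.mulVec_neg, dotProduct_neg, ← Matrix.mulVec_mulVec]
    rw [e1, e2, Matrix.add_mulVec, dotProduct_add]
    ring
  have h := hsum
  rw [hval, hval2] at h
  rw [hfun]
  exact h

end Stmt6Aux

namespace Stmt6Aux

variable {n : ℕ}

theorem vec_ne_zero (G : Matrix (Fin n) (Fin n) ℝ) {x : Fin n → ℝ} (hx : x ≠ 0) (s : ℝ) :
    E G s *ᵥ x ≠ 0 := by
  intro h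
  have hu : IsUnit (E G s) := Matrix.isUnit_exp ((-s) • G)
  obtain ⟨u, hu⟩ := hu
  have h1 : ((↑u⁻¹ : Matrix (Fin n) (Fin n) ℝ) * E G s) = 1 := by
    rw [← hu]; exact u.inv_mul
  have hx0 : x = (↑u⁻¹ : Matrix (Fin n) (Fin n) ℝ) *ᵥ (E G s *ᵥ x) := by
    rw [Matrix.mulVec_mulVec, h1, Matrix.one_mulVec]
  rw [h, Matrix.mulVec_zero] at hx0
  exact hx hx0

theorem q_pos (G : Matrix (Fin n) (Fin n) ℝ) {P : Matrix (Fin n) (Fin n) ℝ} (hP : P.PosDef)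
    {x : Fin n → ℝ} (hx : x ≠ 0) (s : ℝ) : 0 < q G P s x := by
  have := hP.dotProduct_mulVec_pos (vec_ne_zero G hx s)
  simpa [q] using this

theorem q_strictAnti (G P : Matrix (Fin n) (Fin n) ℝ) (hmono : (P * G + Gᵀ * P).PosDef)
    {x : Fin n → ℝ} (hx : x ≠ 0) : StrictAnti (fun s => q G P s x) := by
  apply strictAnti_of_deriv_neg
  intro s
  rw [(hasDerivAt_q G P x s).deriv]
  have := hmono.dotProduct_mulVec_pos (vec_ne_zero G hx s)
  simp only [star_trivial] at this
  linarith

theorem q_zero (G P : Matrix (Fin n) (Fin n) ℝ) (s : ℝ) : q G P s (0 : Fin n → ℝ) = 0 := by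
  simp [q]

theorem q_cont (G P : Matrix (Fin n) (Fin n) ℝ) (s : ℝ) :
    Continuous (fun x : Fin n → ℝ => q G P s x) := by
  apply Continuous.dotProduct
  · exact (continuous_const.matrix_mulVec continuous_id)
  · exact continuous_const.matrix_mulVec (continuous_const.matrix_mulVec continuous_id)

end Stmt6Aux

open Stmt6Aux Topology in
theorem stmt6 {n : ℕ} (G P : Matrix (Fin n) (Fin n) ℝ)
    (hP : P.PosDef) (hmono : (P * G + Gᵀ * P).PosDef)
    (hnorm : (Fin n → ℝ) → ℝ) (hcan : IsCanonicalHomNorm G P hnorm) :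
    Continuous hnorm := by
  obtain ⟨h0, hpos⟩ := hcan
  have key : ∀ x : Fin n → ℝ, x ≠ 0 → q G P (Real.log (hnorm x)) x = 1 := by
    intro x hx
    have h := (hpos x hx).2
    rw [wnorm] at h
    exact Real.sqrt_eq_one.mp h
  have anti : ∀ x : Fin n → ℝ, x ≠ 0 → StrictAnti (fun s => q G P s x) := fun x hx =>
    q_strictAnti G P hmono hx
  rw [continuous_iff_continuousAt]
  intro x0
  by_cases hx0 : x0 = 0
  · subst hx0
    rw [ContinuousAt, h0, Metric.tendsto_nhds]
    intro ε hε
    have hmem : {x : Fin n → ℝ | q G P (Real.log ε) x < 1} ∈ 𝓝 (0 : Fin n → ℝ) := by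
      apply (isOpen_lt (q_cont G P _) continuous_const).mem_nhds
      simp [q_zero]
    filter_upwards [hmem] with x hxS
    by_cases hx : x = 0
    · simpa [hx, h0] using hε
    · have hq1 := key x hx
      have hlt : Real.log (hnorm x) < Real.log ε := by
        have h := (anti x hx).lt_iff_gt (a := Real.log ε) (b := Real.log (hnorm x))
        rw [hq1] at h
        exact h.mp hxS
      have hx_pos := (hpos x hx).1
      have hlt2 : hnorm x < ε := by
        have h := Real.exp_lt_exp.mpr hlt
        rwa [Real.exp_log hx_pos, Real.exp_log hε] at h
      rw [Real.dist_eq, sub_zero, abs_of_pos hx_pos]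
      exact hlt2
  · set s0 := Real.log (hnorm x0) with hs0
    have hT : Filter.Tendsto (fun x => Real.log (hnorm x)) (𝓝 x0) (𝓝 s0) := by
      rw [Metric.tendsto_nhds]
      intro δ hδ
      have hq0 := key x0 hx0
      have h1 : q G P (s0 + δ) x0 < 1 := by
        rw [← hq0]; exact anti x0 hx0 (by linarith)
      have h2 : 1 < q G P (s0 - δ) x0 := by
        rw [← hq0]; exact anti x0 hx0 (by linarith)
      have hU : {x : Fin n → ℝ | q G P (s0 + δ) x < 1 ∧ 1 < q G P (s0 - δ) x} ∈ 𝓝 x0 := by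
        apply IsOpen.mem_nhds
        · exact (isOpen_lt (q_cont G P _) continuous_const).inter
            (isOpen_lt continuous_const (q_cont G P _))
        · exact ⟨h1, h2⟩
      filter_upwards [hU] with x hx
      have hxne : x ≠ 0 := by
        intro h
        rw [h] at hx
        simp only [q_zero] at hx
        exact absurd hx.2 (by norm_num)
      have hqx := key x hxne
      have l1 : Real.log (hnorm x) < s0 + δ := by
        have h := (anti x hxne).lt_iff_gt (a := s0 + δ) (b := Real.log (hnorm x))
        rw [hqx] at h
        exact h.mp hx.1
      have l2 : s0 - δ < Real.log (hnorm x) := by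
        have h := (anti x hxne).lt_iff_gt (a := Real.log (hnorm x)) (b := s0 - δ)
        rw [hqx] at h
        exact h.mp hx.2
      rw [Real.dist_eq, abs_sub_lt_iff]
      constructor <;> linarith
    have hexp : Filter.Tendsto (fun x => Real.exp (Real.log (hnorm x))) (𝓝 x0)
        (𝓝 (Real.exp s0)) := Real.continuous_exp.continuousAt.tendsto.comp hT
    have hev : ∀ᶠ x in 𝓝 x0, Real.exp (Real.log (hnorm x)) = hnorm x := by
      filter_upwards [isOpen_ne.mem_nhds hx0] with x hxne
      exact Real.exp_log (hpos x hxne).1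
    have heq : Real.exp s0 = hnorm x0 := Real.exp_log (hpos x0 hx0).1
    rw [ContinuousAt, ← heq]
    exact hexp.congr' hev
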